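/- Let y, aⁱ, aʲ : ℝ → ℝ be functions and γⁱ, γʲ ∈ ℝ with sin γⁱ ≠ 0, sin γʲ ≠ 0, sin(γⁱ − γʲ) ≠ 0. Define yᵢ := aⁱ·y / sin γⁱ, yⱼ := aʲ·y / sin γʲ, aⁱⱼ := (aⁱ/aʲ − 1)/(cot γʲ − cot γⁱ) (assuming aʲ nonvanishing), and y_{ij} := aⁱⱼ·yⱼ / sin γⁱ. Then the linear superposition principle sin(γⁱ − γʲ)·y_{ij} = sin(γⁱ)·yᵢ − sin(γʲ)·yⱼ holds identically. -/

import Mathlib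

/-- The linear superposition principle
`sin(γⁱ − γʲ)·y_{ij} = sin γⁱ·yᵢ − sin γʲ·yⱼ` for the loxodromic reduction of the
tangential map. -/
theorem loxodrome_linear_superposition
    (y ai aj : ℝ → ℝ) (γi γj : ℝ)
    (hγi : Real.sin γi ≠ 0) (hγj : Real.sin γj ≠ 0)
    (hγij : Real.sin (γi - γj) ≠ 0)
    (haj0 : ∀ t, aj t ≠ 0)
    (yi yj aij yij : ℝ → ℝ)
    (hyi : ∀ t, yi t = ai t * y t / Real.sin γi)
    (hyj : ∀ t, yj t = aj t * y t / Real.sin γj)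
    (haij : ∀ t, aij t = (ai t / aj t - 1)
      / (Real.cos γj / Real.sin γj - Real.cos γi / Real.sin γi))
    (hyij : ∀ t, yij t = aij t * yj t / Real.sin γi) :
    ∀ t, Real.sin (γi - γj) * yij t = Real.sin γi * yi t - Real.sin γj * yj t := by
  intro t
  have hd : Real.cos γj / Real.sin γj - Real.cos γi / Real.sin γi
      = Real.sin (γi - γj) / (Real.sin γi * Real.sin γj) := by
    rw [Real.sin_sub]; field_simp
  rw [hyij, haij, hyj, hyi, hd]
  field_simp [haj0 t]
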